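/- Let k be a perfect field of characteristic p and X a smooth affine variety over k with étale coordinates t_1,…,t_n (i.e. an étale map to affine n-space), with dual derivations ∂_1,…,∂_n. Then the ring Diff_X^r of Grothendieck differential operators commuting with p^r-th powers of functions, Diff_X^r = End_{O_X^{p^r}}(O_X), is a free module over O_X^{(r)} = {f^{p^r} : f ∈ O_X}-generated subring of rank p^{2rn}, with basis given by the operators t^a ∂^{(b)} = t_1^{a_1}⋯t_n^{a_n} ∂_1^{(b_1)}⋯∂_n^{(b_n)} for 0 ≤ a_j, b_j < p^r, where ∂^{(b)} denotes divided power differential operators. -/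

import Mathlib

open Finset MvPolynomial

namespace DiffRAux

theorem lucas_aux {p : ℕ} (hp : p.Prime) :
    ∀ (r : ℕ) (s m b : ℕ), b < p ^ r →
      Nat.choose (p ^ r * s + m) b ≡ Nat.choose m b [MOD p] := by
  haveI : Fact p.Prime := ⟨hp⟩
  intro r
  induction r with
  | zero =>
    intro s m b hb
    rw [pow_zero] at hb
    have : b = 0 := by omega
    subst this
    simp [Nat.ModEq.refl]
  | succ r ih =>
    intro s m b hb
    have hN : p ^ (r + 1) * s + m = m + (p ^ r * s) * p := by ring
    have h1 : (p ^ (r+1) * s + m) % p = m % p := by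
      rw [hN, Nat.add_mul_mod_self_right]
    have h2 : (p ^ (r+1) * s + m) / p = p ^ r * s + m / p := by
      rw [hN, Nat.add_mul_div_right _ _ hp.pos, add_comm]
    have hbp : b / p < p ^ r := by
      rw [Nat.div_lt_iff_lt_mul hp.pos]
      calc b < p ^ (r+1) := hb
        _ = p ^ r * p := by ring
    calc Nat.choose (p ^ (r+1) * s + m) b
        ≡ Nat.choose ((p ^ (r+1) * s + m) % p) (b % p) *
            Nat.choose ((p ^ (r+1) * s + m) / p) (b / p) [MOD p] :=
          Choose.choose_modEq_choose_mod_mul_choose_div_nat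
      _ = Nat.choose (m % p) (b % p) * Nat.choose (p ^ r * s + m / p) (b / p) := by
          rw [h1, h2]
      _ ≡ Nat.choose (m % p) (b % p) * Nat.choose (m / p) (b / p) [MOD p] :=
          Nat.ModEq.mul_left _ (ih s (m / p) (b / p) hbp)
      _ ≡ Nat.choose m b [MOD p] :=
          Choose.choose_modEq_choose_mod_mul_choose_div_nat.symm

/-- Core alternating orthogonality sum in `ℤ`. -/

theorem coreZ {q a : ℕ} (b : ℕ) (ha : a < q) :
    ∑ c ∈ range q, (-1 : ℤ) ^ c * (a.choose c * c.choose b) =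
      if a = b then (-1) ^ a else 0 := by
  rcases lt_or_ge a b with hab | hba
  · rw [if_neg (by omega)]
    apply Finset.sum_eq_zero
    intro c _
    rcases le_or_gt c a with hca | hac
    · have : Nat.choose c b = 0 := Nat.choose_eq_zero_of_lt (by omega)
      simp [this]
    · have : Nat.choose a c = 0 := Nat.choose_eq_zero_of_lt hac
      simp [this]
  · have hsub : ∑ c ∈ range q, (-1 : ℤ) ^ c * (a.choose c * c.choose b) =
        ∑ c ∈ Ico b (a + 1), (-1 : ℤ) ^ c * (a.choose c * c.choose b) := by
      refine (Finset.sum_subset ?_ ?_).symm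
      · intro c hc
        simp only [mem_Ico] at hc
        simp only [mem_range]
        omega
      · intro c _ hc
        simp only [mem_Ico, not_and, not_lt] at hc
        rcases le_or_gt b c with hbc | hcb
        · have : Nat.choose a c = 0 := Nat.choose_eq_zero_of_lt (hc hbc)
          simp [this]
        · have : Nat.choose c b = 0 := Nat.choose_eq_zero_of_lt hcb
          simp [this]
    rw [hsub, Finset.sum_Ico_eq_sum_range]
    have hterm : ∀ d ∈ range (a + 1 - b),
        (-1 : ℤ) ^ (b + d) * (a.choose (b + d) * (b + d).choose b) =
        (-1 : ℤ) ^ b * (a.choose b) * ((-1 : ℤ) ^ d * (a - b).choose d) := by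
      intro d hd
      simp only [mem_range] at hd
      have h1 : a.choose (b + d) * (b + d).choose b = a.choose b * (a - b).choose d := by
        have := Nat.choose_mul (n := a) (k := b + d) (s := b) (by omega)
        simpa using this
      have h2 : (a.choose (b + d) : ℤ) * ((b + d).choose b) =
          (a.choose b : ℤ) * ((a - b).choose d) := by exact_mod_cast h1
      rw [pow_add]
      linear_combination ((-1 : ℤ) ^ b * (-1 : ℤ) ^ d) * h2
    rw [Finset.sum_congr rfl hterm, ← Finset.mul_sum]
    have hr : a + 1 - b = (a - b) + 1 := by omega
    rw [hr, Int.alternating_sum_range_choose]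
    rcases eq_or_lt_of_le hba with h | h
    · subst h
      simp
    · rw [if_neg (by omega), if_neg (by omega), mul_zero]

theorem sumZ {q a : ℕ} (b t : ℕ) (ha : a < q) :
    ∑ c ∈ range q, (-1 : ℤ) ^ (c + t) * (a.choose c * c.choose b) =
      if a = b then (-1) ^ (a + t) else 0 := by
  have : ∀ c, (-1 : ℤ) ^ (c + t) * (a.choose c * c.choose b) =
      (-1 : ℤ) ^ t * ((-1 : ℤ) ^ c * (a.choose c * c.choose b)) := by
    intro c; rw [pow_add]; ring
  simp only [this, ← Finset.mul_sum, coreZ b ha]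
  split_ifs with h
  · rw [pow_add]; ring
  · ring

variable {k : Type*} [Field k] {n : ℕ}

noncomputable def hasse (k : Type*) [Field k] (n : ℕ) (b : Fin n → ℕ) :
    MvPolynomial (Fin n) k →ₗ[k] MvPolynomial (Fin n) k :=
  (basisMonomials (Fin n) k).constr k fun m =>
    monomial (m - Finsupp.equivFunOnFinite.symm b) ((∏ j, (m j).choose (b j) : ℕ) : k)

theorem hasse_monomial (b : Fin n → ℕ) (m : Fin n →₀ ℕ) :
    hasse k n b (monomial m 1) =
      monomial (m - Finsupp.equivFunOnFinite.symm b)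
        ((∏ j, (m j).choose (b j) : ℕ) : k) := by
  have h : (monomial m 1 : MvPolynomial (Fin n) k) = basisMonomials (Fin n) k m := by
    rw [coe_basisMonomials]
  rw [h, hasse, Module.Basis.constr_basis]

theorem hasse_monomial' (b : Fin n → ℕ) (m : Fin n →₀ ℕ) (a : k) :
    hasse k n b (monomial m a) =
      monomial (m - Finsupp.equivFunOnFinite.symm b)
        (a * ((∏ j, (m j).choose (b j) : ℕ) : k)) := by
  have h : (monomial m a : MvPolynomial (Fin n) k) = a • monomial m 1 := by
    rw [smul_monomial, smul_eq_mul, mul_one]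
  rw [h, map_smul, hasse_monomial, smul_monomial, smul_eq_mul]

theorem prod_X_pow (v : Fin n → ℕ) :
    (∏ j, (X j : MvPolynomial (Fin n) k) ^ v j) =
      monomial (Finsupp.equivFunOnFinite.symm v) 1 := by
  have h1 : ∀ x, (Finsupp.equivFunOnFinite.symm v) x = v x := fun x => by
    rfl
  rw [← MvPolynomial.prod_X_pow_eq_monomial]
  calc ∏ j, (X j : MvPolynomial (Fin n) k) ^ v j
      = ∏ x ∈ (Finsupp.equivFunOnFinite.symm v).support, X x ^ v x := by
        refine (Finset.prod_subset (Finset.subset_univ _) fun x _ hx => ?_).symm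
        have : v x = 0 := by rw [← h1 x]; exact Finsupp.notMem_support_iff.mp hx
        rw [this, pow_zero]
    _ = ∏ x ∈ (Finsupp.equivFunOnFinite.symm v).support,
          X x ^ (Finsupp.equivFunOnFinite.symm v) x :=
        Finset.prod_congr rfl fun x _ => by rw [h1 x]

theorem prod_choose_cast {p : ℕ} (hp : p.Prime) [CharP k p] (r : ℕ)
    (s m : Fin n → ℕ) (b : Fin n → ℕ) (hb : ∀ j, b j < p ^ r) :
    ((∏ j, (p ^ r * s j + m j).choose (b j) : ℕ) : k) =
      ((∏ j, (m j).choose (b j) : ℕ) : k) := by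
  rw [Nat.cast_prod, Nat.cast_prod]
  refine Finset.prod_congr rfl fun j _ => ?_
  exact CharP.natCast_eq_natCast' k p (lucas_aux hp r (s j) (m j) (b j) (hb j))

theorem hasse_comm {p : ℕ} (hp : p.Prime) [CharP k p] (r : ℕ) (b : Fin n → ℕ)
    (hb : ∀ j, b j < p ^ r) (g f : MvPolynomial (Fin n) k) :
    hasse k n b (g ^ p ^ r * f) = g ^ p ^ r * hasse k n b f := by
  haveI : Fact p.Prime := ⟨hp⟩
  induction g using MvPolynomial.induction_on' generalizing f with
  | add g1 g2 ih1 ih2 =>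
    rw [add_pow_expChar_pow, add_mul, map_add, ih1, ih2, add_mul]
  | monomial s a =>
    -- reduce to the case where `f` is a monomial, via linear maps
    have key : ∀ m : Fin n →₀ ℕ,
        hasse k n b ((monomial s a) ^ p ^ r * monomial m 1) =
          (monomial s a) ^ p ^ r * hasse k n b (monomial m 1) := by
      intro m
      rw [monomial_pow, monomial_mul, hasse_monomial', hasse_monomial, monomial_mul]
      have happ : ∀ j, (p ^ r • s + m) j = p ^ r * s j + m j := by
        intro j
        simp [Finsupp.add_apply, Finsupp.smul_apply, smul_eq_mul]
      have hcoeff : ((∏ j, ((p ^ r • s + m) j).choose (b j) : ℕ) : k) =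
          ((∏ j, (m j).choose (b j) : ℕ) : k) := by
        simp only [happ]
        exact prod_choose_cast hp r s (fun j => m j) b hb
      by_cases hbm : ∀ j, b j ≤ m j
      · have hexp : p ^ r • s + m - Finsupp.equivFunOnFinite.symm b =
            p ^ r • s + (m - Finsupp.equivFunOnFinite.symm b) := by
          ext j
          simp only [Finsupp.tsub_apply, Finsupp.add_apply, Finsupp.smul_apply, smul_eq_mul,
            Finsupp.coe_equivFunOnFinite_symm]
          have := hbm j
          omega
        rw [hexp, hcoeff]
        ring_nf
      · push_neg at hbm
        obtain ⟨j0, hj0⟩ := hbm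
        have hz : (∏ j, (m j).choose (b j) : ℕ) = 0 :=
          Finset.prod_eq_zero (Finset.mem_univ j0) (Nat.choose_eq_zero_of_lt hj0)
        rw [hz] at hcoeff ⊢
        rw [hcoeff]
        simp
    have heq : (hasse k n b) ∘ₗ (LinearMap.mulLeft k ((monomial s a) ^ p ^ r)) =
        (LinearMap.mulLeft k ((monomial s a) ^ p ^ r)) ∘ₗ hasse k n b := by
      apply Module.Basis.ext (basisMonomials (Fin n) k)
      intro m
      have h : basisMonomials (Fin n) k m = (monomial m 1 : MvPolynomial (Fin n) k) := by
        rw [coe_basisMonomials]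
      simp only [LinearMap.comp_apply, LinearMap.mulLeft_apply, h]
      exact key m
    have := LinearMap.congr_fun heq f
    simpa using this

theorem coordX1 (j : Fin n) {q a b : ℕ} (ha : a < q) :
    ∑ c ∈ range q,
      ((a.choose c : MvPolynomial (Fin n) k) *
        (((-1:ℤ)^(c-b) * ((c.choose b : ℕ) : ℤ) : ℤ) : MvPolynomial (Fin n) k)) *
        X j ^ ((a - c) + (c - b)) = if a = b then 1 else 0 := by
  have step : ∀ c ∈ range q,
      ((a.choose c : MvPolynomial (Fin n) k) *
        (((-1:ℤ)^(c-b) * ((c.choose b : ℕ) : ℤ) : ℤ) : MvPolynomial (Fin n) k)) *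
        X j ^ ((a - c) + (c - b)) =
      ((((-1:ℤ)^(c+b) * (a.choose c * c.choose b : ℕ) : ℤ)) : MvPolynomial (Fin n) k) *
        X j ^ (a - b) := by
    intro c _
    by_cases h1 : b ≤ c ∧ c ≤ a
    · have hexp : (a - c) + (c - b) = a - b := by omega
      have hsgn : (-1:ℤ)^(c-b) = (-1)^(c+b) := by
        have h2 : c - b + 2*b = c + b := by omega
        calc (-1:ℤ)^(c-b) = (-1)^(c-b) * ((-1)^2)^b := by norm_num
          _ = (-1)^(c-b+2*b) := by rw [← pow_mul, ← pow_add]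
          _ = (-1)^(c+b) := by rw [h2]
      rw [hexp, hsgn]
      push_cast
      ring
    · have hz : a.choose c * c.choose b = 0 := by
        rcases not_and_or.mp h1 with h | h
        · exact mul_eq_zero_of_right _ (Nat.choose_eq_zero_of_lt (by omega))
        · exact mul_eq_zero_of_left (Nat.choose_eq_zero_of_lt (by omega)) _
      have hz2 : c.choose b = 0 ∨ a.choose c = 0 := by
        rcases Nat.mul_eq_zero.mp hz with h | h
        · right; exact h
        · left; exact h
      rcases hz2 with h | h <;> simp [h, hz]
  rw [Finset.sum_congr rfl step, ← Finset.sum_mul, ← Int.cast_sum,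
    Finset.sum_congr rfl (fun c _ => by push_cast; ring :
      ∀ c ∈ range q, ((-1:ℤ)^(c+b) * ((a.choose c * c.choose b : ℕ):ℤ)) =
        (-1:ℤ)^(c+b) * ((a.choose c : ℤ) * (c.choose b : ℤ))), sumZ b b ha]
  split_ifs with h
  · subst h
    have : (-1:ℤ)^(a+a) = 1 := Even.neg_one_pow ⟨a, by omega⟩
    rw [this, Nat.sub_self, pow_zero]
    norm_num
  · norm_num

theorem coordX2 (j : Fin n) {q a b : ℕ} (ha : a < q) :
    ∑ c ∈ range q,
      ((((-1:ℤ)^(a-c) * ((a.choose c : ℕ) : ℤ) : ℤ) : MvPolynomial (Fin n) k) *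
        (c.choose b : MvPolynomial (Fin n) k)) *
        X j ^ ((c - b) + (a - c)) = if a = b then 1 else 0 := by
  have step : ∀ c ∈ range q,
      ((((-1:ℤ)^(a-c) * ((a.choose c : ℕ) : ℤ) : ℤ) : MvPolynomial (Fin n) k) *
        (c.choose b : MvPolynomial (Fin n) k)) *
        X j ^ ((c - b) + (a - c)) =
      ((((-1:ℤ)^(c+a) * (a.choose c * c.choose b : ℕ) : ℤ)) : MvPolynomial (Fin n) k) *
        X j ^ (a - b) := by
    intro c _
    by_cases h1 : b ≤ c ∧ c ≤ a
    · have hexp : (c - b) + (a - c) = a - b := by omega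
      have hsgn : (-1:ℤ)^(a-c) = (-1)^(c+a) := by
        have h2 : a - c + 2*c = c + a := by omega
        calc (-1:ℤ)^(a-c) = (-1)^(a-c) * ((-1)^2)^c := by norm_num
          _ = (-1)^(a-c+2*c) := by rw [← pow_mul, ← pow_add]
          _ = (-1)^(c+a) := by rw [h2]
      rw [hexp, hsgn]
      push_cast
      ring
    · have hz : a.choose c * c.choose b = 0 := by
        rcases not_and_or.mp h1 with h | h
        · exact mul_eq_zero_of_right _ (Nat.choose_eq_zero_of_lt (by omega))
        · exact mul_eq_zero_of_left (Nat.choose_eq_zero_of_lt (by omega)) _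
      have hz2 : c.choose b = 0 ∨ a.choose c = 0 := by
        rcases Nat.mul_eq_zero.mp hz with h | h
        · right; exact h
        · left; exact h
      rcases hz2 with h | h <;> simp [h, hz]
  rw [Finset.sum_congr rfl step, ← Finset.sum_mul, ← Int.cast_sum,
    Finset.sum_congr rfl (fun c _ => by push_cast; ring :
      ∀ c ∈ range q, ((-1:ℤ)^(c+a) * ((a.choose c * c.choose b : ℕ):ℤ)) =
        (-1:ℤ)^(c+a) * ((a.choose c : ℤ) * (c.choose b : ℤ))), sumZ b a ha]
  split_ifs with h
  · subst h
    have : (-1:ℤ)^(a+a) = 1 := Even.neg_one_pow ⟨a, by omega⟩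
    rw [this, Nat.sub_self, pow_zero]
    norm_num
  · norm_num

theorem prod_ite_eq_ite {q : ℕ} (a' b' : Fin n → Fin q) :
    (∏ j, if (a' j : ℕ) = (b' j : ℕ) then (1 : MvPolynomial (Fin n) k) else 0) =
      if a' = b' then 1 else 0 := by
  by_cases h : a' = b'
  · subst h; simp
  · rw [if_neg h]
    obtain ⟨j0, hj0⟩ := Function.ne_iff.mp h
    refine Finset.prod_eq_zero (Finset.mem_univ j0) ?_
    rw [if_neg]
    exact fun hv => hj0 (Fin.ext hv)

theorem deltaSum1 {q : ℕ} (a' b' : Fin n → Fin q) :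
    ∑ b : Fin n → Fin q,
      ((∏ j, ((a' j : ℕ).choose (b j : ℕ)) : ℕ) : MvPolynomial (Fin n) k) *
        ((∏ j, ((-1:ℤ)^((b j : ℕ) - (b' j : ℕ)) *
            (((b j : ℕ).choose (b' j : ℕ) : ℕ) : ℤ)) : ℤ) : MvPolynomial (Fin n) k) *
        ((∏ j, (X j : MvPolynomial (Fin n) k) ^ ((a' j : ℕ) - (b j : ℕ))) *
         (∏ j, (X j : MvPolynomial (Fin n) k) ^ ((b j : ℕ) - (b' j : ℕ)))) =
      if a' = b' then 1 else 0 := by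
  have step : ∀ b : Fin n → Fin q,
      ((∏ j, ((a' j : ℕ).choose (b j : ℕ)) : ℕ) : MvPolynomial (Fin n) k) *
        ((∏ j, ((-1:ℤ)^((b j : ℕ) - (b' j : ℕ)) *
            (((b j : ℕ).choose (b' j : ℕ) : ℕ) : ℤ)) : ℤ) : MvPolynomial (Fin n) k) *
        ((∏ j, (X j : MvPolynomial (Fin n) k) ^ ((a' j : ℕ) - (b j : ℕ))) *
         (∏ j, (X j : MvPolynomial (Fin n) k) ^ ((b j : ℕ) - (b' j : ℕ)))) =
      ∏ j, (((a' j : ℕ).choose (b j : ℕ) : MvPolynomial (Fin n) k) *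
        (((-1:ℤ)^((b j : ℕ) - (b' j : ℕ)) * (((b j : ℕ).choose (b' j : ℕ) : ℕ) : ℤ) : ℤ) :
            MvPolynomial (Fin n) k)) *
        X j ^ (((a' j : ℕ) - (b j : ℕ)) + ((b j : ℕ) - (b' j : ℕ))) := by
    intro b
    rw [Nat.cast_prod, Int.cast_prod, ← Finset.prod_mul_distrib, ← Finset.prod_mul_distrib,
      ← Finset.prod_mul_distrib]
    refine Finset.prod_congr rfl fun j _ => ?_
    rw [pow_add]
    try ring
  rw [Finset.sum_congr rfl (fun b _ => step b), ← Fintype.piFinset_univ,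
    ← Finset.prod_univ_sum (t := fun _ : Fin n => (univ : Finset (Fin q)))
      (f := fun j c => (((a' j : ℕ).choose (c : ℕ) : MvPolynomial (Fin n) k) *
        (((-1:ℤ)^((c : ℕ) - (b' j : ℕ)) * (((c : ℕ).choose (b' j : ℕ) : ℕ) : ℤ) : ℤ) :
          MvPolynomial (Fin n) k)) *
        X j ^ (((a' j : ℕ) - (c : ℕ)) + ((c : ℕ) - (b' j : ℕ))))]
  have hcoord : ∀ j ∈ (univ : Finset (Fin n)),
      (∑ c : Fin q, (((a' j : ℕ).choose (c : ℕ) : MvPolynomial (Fin n) k) *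
        (((-1:ℤ)^((c : ℕ) - (b' j : ℕ)) * (((c : ℕ).choose (b' j : ℕ) : ℕ) : ℤ) : ℤ) :
          MvPolynomial (Fin n) k)) *
        X j ^ (((a' j : ℕ) - (c : ℕ)) + ((c : ℕ) - (b' j : ℕ)))) =
      if (a' j : ℕ) = (b' j : ℕ) then 1 else 0 := by
    intro j _
    rw [Fin.sum_univ_eq_sum_range (fun c => (((a' j : ℕ).choose c : MvPolynomial (Fin n) k) *
        (((-1:ℤ)^(c - (b' j : ℕ)) * ((c.choose (b' j : ℕ) : ℕ) : ℤ) : ℤ) :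
          MvPolynomial (Fin n) k)) *
        X j ^ (((a' j : ℕ) - c) + (c - (b' j : ℕ)))) q]
    exact coordX1 j (a' j).isLt
  rw [Finset.prod_congr rfl hcoord, prod_ite_eq_ite a' b']

theorem deltaSum2 {q : ℕ} (b b'' : Fin n → Fin q) :
    ∑ b' : Fin n → Fin q,
      ((∏ j, ((-1:ℤ)^((b j : ℕ) - (b' j : ℕ)) *
            (((b j : ℕ).choose (b' j : ℕ) : ℕ) : ℤ)) : ℤ) : MvPolynomial (Fin n) k) *
        ((∏ j, ((b' j : ℕ).choose (b'' j : ℕ)) : ℕ) : MvPolynomial (Fin n) k) *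
        ((∏ j, (X j : MvPolynomial (Fin n) k) ^ ((b' j : ℕ) - (b'' j : ℕ))) *
         (∏ j, (X j : MvPolynomial (Fin n) k) ^ ((b j : ℕ) - (b' j : ℕ)))) =
      if b = b'' then 1 else 0 := by
  have step : ∀ b' : Fin n → Fin q,
      ((∏ j, ((-1:ℤ)^((b j : ℕ) - (b' j : ℕ)) *
            (((b j : ℕ).choose (b' j : ℕ) : ℕ) : ℤ)) : ℤ) : MvPolynomial (Fin n) k) *
        ((∏ j, ((b' j : ℕ).choose (b'' j : ℕ)) : ℕ) : MvPolynomial (Fin n) k) *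
        ((∏ j, (X j : MvPolynomial (Fin n) k) ^ ((b' j : ℕ) - (b'' j : ℕ))) *
         (∏ j, (X j : MvPolynomial (Fin n) k) ^ ((b j : ℕ) - (b' j : ℕ)))) =
      ∏ j, ((((-1:ℤ)^((b j : ℕ) - (b' j : ℕ)) *
            (((b j : ℕ).choose (b' j : ℕ) : ℕ) : ℤ) : ℤ) : MvPolynomial (Fin n) k) *
          (((b' j : ℕ).choose (b'' j : ℕ) : ℕ) : MvPolynomial (Fin n) k)) *
        X j ^ (((b' j : ℕ) - (b'' j : ℕ)) + ((b j : ℕ) - (b' j : ℕ))) := by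
    intro b'
    rw [Nat.cast_prod, Int.cast_prod, ← Finset.prod_mul_distrib, ← Finset.prod_mul_distrib,
      ← Finset.prod_mul_distrib]
    refine Finset.prod_congr rfl fun j _ => ?_
    rw [pow_add]
    try ring
  rw [Finset.sum_congr rfl (fun b' _ => step b'), ← Fintype.piFinset_univ,
    ← Finset.prod_univ_sum (t := fun _ : Fin n => (univ : Finset (Fin q)))
      (f := fun j c => ((((-1:ℤ)^((b j : ℕ) - (c : ℕ)) *
          (((b j : ℕ).choose (c : ℕ) : ℕ) : ℤ) : ℤ) : MvPolynomial (Fin n) k) *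
          (((c : ℕ).choose (b'' j : ℕ) : ℕ) : MvPolynomial (Fin n) k)) *
        X j ^ (((c : ℕ) - (b'' j : ℕ)) + ((b j : ℕ) - (c : ℕ))))]
  have hcoord : ∀ j ∈ (univ : Finset (Fin n)),
      (∑ c : Fin q, ((((-1:ℤ)^((b j : ℕ) - (c : ℕ)) *
          (((b j : ℕ).choose (c : ℕ) : ℕ) : ℤ) : ℤ) : MvPolynomial (Fin n) k) *
          (((c : ℕ).choose (b'' j : ℕ) : ℕ) : MvPolynomial (Fin n) k)) *
        X j ^ (((c : ℕ) - (b'' j : ℕ)) + ((b j : ℕ) - (c : ℕ)))) =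
      if (b j : ℕ) = (b'' j : ℕ) then 1 else 0 := by
    intro j _
    rw [Fin.sum_univ_eq_sum_range (fun c => ((((-1:ℤ)^((b j : ℕ) - c) *
          (((b j : ℕ).choose c : ℕ) : ℤ) : ℤ) : MvPolynomial (Fin n) k) *
          ((c.choose (b'' j : ℕ) : ℕ) : MvPolynomial (Fin n) k)) *
        X j ^ ((c - (b'' j : ℕ)) + ((b j : ℕ) - c))) q]
    exact coordX2 j (b j).isLt
  rw [Finset.prod_congr rfl hcoord, prod_ite_eq_ite b b'']

noncomputable def trf (q : ℕ) (w : (Fin n → Fin q) → MvPolynomial (Fin n) k)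
    (a' : Fin n → Fin q) : MvPolynomial (Fin n) k :=
  ∑ b : Fin n → Fin q, ((∏ j, ((a' j : ℕ).choose (b j : ℕ)) : ℕ) : k) •
    (w b * ∏ j, X j ^ ((a' j : ℕ) - (b j : ℕ)))

/-- The inverse transform. -/

noncomputable def itrf (q : ℕ) (v : (Fin n → Fin q) → MvPolynomial (Fin n) k)
    (b : Fin n → Fin q) : MvPolynomial (Fin n) k :=
  ∑ b' : Fin n → Fin q, (∏ j, ((-1:ℤ)^((b j : ℕ) - (b' j : ℕ)) *
      (((b j : ℕ).choose (b' j : ℕ) : ℕ) : ℤ))) •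
    (v b' * ∏ j, X j ^ ((b j : ℕ) - (b' j : ℕ)))

theorem trf_itrf {q : ℕ} (v : (Fin n → Fin q) → MvPolynomial (Fin n) k)
    (a' : Fin n → Fin q) : trf q (itrf q v) a' = v a' := by
  unfold trf itrf
  simp only [Finset.sum_mul, Finset.smul_sum, smul_mul_assoc]
  rw [Finset.sum_comm]
  have step : ∀ b' b : Fin n → Fin q,
      ((∏ j, ((a' j : ℕ).choose (b j : ℕ)) : ℕ) : k) •
        ((∏ j, ((-1:ℤ)^((b j : ℕ) - (b' j : ℕ)) *
            (((b j : ℕ).choose (b' j : ℕ) : ℕ) : ℤ)) : ℤ) •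
          (v b' * (∏ j, (X j : MvPolynomial (Fin n) k) ^ ((b j : ℕ) - (b' j : ℕ))) *
            (∏ j, (X j : MvPolynomial (Fin n) k) ^ ((a' j : ℕ) - (b j : ℕ))))) =
      (((∏ j, ((a' j : ℕ).choose (b j : ℕ)) : ℕ) : MvPolynomial (Fin n) k) *
        ((∏ j, ((-1:ℤ)^((b j : ℕ) - (b' j : ℕ)) *
            (((b j : ℕ).choose (b' j : ℕ) : ℕ) : ℤ)) : ℤ) : MvPolynomial (Fin n) k) *
        ((∏ j, (X j : MvPolynomial (Fin n) k) ^ ((a' j : ℕ) - (b j : ℕ))) *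
         (∏ j, (X j : MvPolynomial (Fin n) k) ^ ((b j : ℕ) - (b' j : ℕ))))) * v b' := by
    intro b' b
    rw [MvPolynomial.smul_eq_C_mul, map_natCast, zsmul_eq_mul]
    ring
  calc ∑ b' : Fin n → Fin q, ∑ b : Fin n → Fin q,
        ((∏ j, ((a' j : ℕ).choose (b j : ℕ)) : ℕ) : k) •
        ((∏ j, ((-1:ℤ)^((b j : ℕ) - (b' j : ℕ)) *
            (((b j : ℕ).choose (b' j : ℕ) : ℕ) : ℤ)) : ℤ) •
          (v b' * (∏ j, (X j : MvPolynomial (Fin n) k) ^ ((b j : ℕ) - (b' j : ℕ))) *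
            (∏ j, (X j : MvPolynomial (Fin n) k) ^ ((a' j : ℕ) - (b j : ℕ)))))
      = ∑ b' : Fin n → Fin q, (if a' = b' then (1 : MvPolynomial (Fin n) k) else 0) * v b' := by
        refine Finset.sum_congr rfl fun b' _ => ?_
        rw [Finset.sum_congr rfl fun b _ => step b' b, ← Finset.sum_mul, deltaSum1 a' b']
    _ = v a' := by simp

theorem itrf_trf {q : ℕ} (w : (Fin n → Fin q) → MvPolynomial (Fin n) k)
    (b : Fin n → Fin q) : itrf q (trf q w) b = w b := by
  unfold trf itrf
  simp only [Finset.sum_mul, Finset.smul_sum, smul_mul_assoc]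
  rw [Finset.sum_comm]
  have step : ∀ (b'' b' : Fin n → Fin q),
      (∏ j, ((-1:ℤ)^((b j : ℕ) - (b' j : ℕ)) *
          (((b j : ℕ).choose (b' j : ℕ) : ℕ) : ℤ))) •
        (((∏ j, ((b' j : ℕ).choose (b'' j : ℕ)) : ℕ) : k) •
          (w b'' * (∏ j, (X j : MvPolynomial (Fin n) k) ^ ((b' j : ℕ) - (b'' j : ℕ))) *
            (∏ j, (X j : MvPolynomial (Fin n) k) ^ ((b j : ℕ) - (b' j : ℕ))))) =
      (((∏ j, ((-1:ℤ)^((b j : ℕ) - (b' j : ℕ)) *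
            (((b j : ℕ).choose (b' j : ℕ) : ℕ) : ℤ)) : ℤ) : MvPolynomial (Fin n) k) *
        ((∏ j, ((b' j : ℕ).choose (b'' j : ℕ)) : ℕ) : MvPolynomial (Fin n) k) *
        ((∏ j, (X j : MvPolynomial (Fin n) k) ^ ((b' j : ℕ) - (b'' j : ℕ))) *
         (∏ j, (X j : MvPolynomial (Fin n) k) ^ ((b j : ℕ) - (b' j : ℕ))))) * w b'' := by
    intro b'' b'
    rw [MvPolynomial.smul_eq_C_mul, map_natCast, zsmul_eq_mul]
    ring
  calc ∑ b'' : Fin n → Fin q, ∑ b' : Fin n → Fin q,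
        (∏ j, ((-1:ℤ)^((b j : ℕ) - (b' j : ℕ)) *
            (((b j : ℕ).choose (b' j : ℕ) : ℕ) : ℤ))) •
        (((∏ j, ((b' j : ℕ).choose (b'' j : ℕ)) : ℕ) : k) •
          (w b'' * (∏ j, (X j : MvPolynomial (Fin n) k) ^ ((b' j : ℕ) - (b'' j : ℕ))) *
            (∏ j, (X j : MvPolynomial (Fin n) k) ^ ((b j : ℕ) - (b' j : ℕ)))))
      = ∑ b'' : Fin n → Fin q, (if b = b'' then (1 : MvPolynomial (Fin n) k) else 0) * w b'' := by
        refine Finset.sum_congr rfl fun b'' _ => ?_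
        rw [Finset.sum_congr rfl fun b' _ => step b'' b', ← Finset.sum_mul, deltaSum2 b b'']
    _ = w b := by simp

theorem charP_of_prime {p : ℕ} (hp : p.Prime) [h : ExpChar k p] : CharP k p := by
  cases h with
  | zero => exact absurd rfl hp.ne_one
  | prime hq => assumption

/-- The submodule of `p^r`-th powers. -/

noncomputable def pSub (p : ℕ) (hp : p.Prime) [ExpChar k p] [PerfectRing k p] (r : ℕ) :
    Submodule k (MvPolynomial (Fin n) k) where
  carrier := {f | ∃ y, y ^ p ^ r = f}
  zero_mem' := ⟨0, zero_pow (pow_pos hp.pos r).ne'⟩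
  add_mem' := by
    haveI : CharP k p := charP_of_prime hp
    haveI : Fact p.Prime := ⟨hp⟩
    rintro f g ⟨y, rfl⟩ ⟨z, rfl⟩
    exact ⟨y + z, add_pow_expChar_pow y z p r⟩
  smul_mem' := by
    haveI : CharP k p := charP_of_prime hp
    haveI : Fact p.Prime := ⟨hp⟩
    rintro c f ⟨y, rfl⟩
    refine ⟨(iterateFrobeniusEquiv k p r).symm c • y, ?_⟩
    rw [smul_pow]
    congr 1
    have := (iterateFrobeniusEquiv k p r).apply_symm_apply c
    rwa [iterateFrobeniusEquiv_def] at this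

/-- Extraction of the component of residue class `a` in the decomposition of `k[t]`
over the subring of `q`-th powers. -/

noncomputable def residue (q : ℕ) (a : Fin n → Fin q) :
    MvPolynomial (Fin n) k →ₗ[k] MvPolynomial (Fin n) k :=
  (basisMonomials (Fin n) k).constr k fun m =>
    if ∀ j, (m j) % q = (a j : ℕ) then
      monomial (m - Finsupp.equivFunOnFinite.symm fun j => (a j : ℕ)) 1 else 0

theorem residue_monomial (q : ℕ) (a : Fin n → Fin q) (m : Fin n →₀ ℕ) (c : k) :
    residue q a (monomial m c) =
      if ∀ j, (m j) % q = (a j : ℕ) then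
        monomial (m - Finsupp.equivFunOnFinite.symm fun j => (a j : ℕ)) c else 0 := by
  have h : (monomial m c : MvPolynomial (Fin n) k) = c • (monomial m 1 : MvPolynomial (Fin n) k) := by
    rw [smul_monomial, smul_eq_mul, mul_one]
  have h2 : residue q a (monomial m 1 : MvPolynomial (Fin n) k) =
      if ∀ j, (m j) % q = (a j : ℕ) then
        monomial (m - Finsupp.equivFunOnFinite.symm fun j => (a j : ℕ)) 1 else 0 := by
    have hb : (monomial m 1 : MvPolynomial (Fin n) k) = basisMonomials (Fin n) k m := by
      rw [coe_basisMonomials]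
    rw [hb, residue, Module.Basis.constr_basis]
  rw [h, map_smul, h2]
  split_ifs
  · rw [smul_monomial, smul_eq_mul, mul_one]
  · rw [smul_zero]

theorem sum_residue (q : ℕ) (hq : 0 < q) (f : MvPolynomial (Fin n) k) :
    ∑ a : Fin n → Fin q, residue q a f * ∏ j, X j ^ (a j : ℕ) = f := by
  induction f using MvPolynomial.induction_on' with
  | add f g ihf ihg =>
    simp only [map_add, add_mul, Finset.sum_add_distrib, ihf, ihg]
  | monomial m c =>
    have hzero : ∀ a : Fin n → Fin q, a ≠ (fun j : Fin n => (⟨m j % q, Nat.mod_lt _ hq⟩ : Fin q)) →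
        residue q a (monomial m c) * ∏ j, X j ^ (a j : ℕ) = 0 := by
      intro a ha
      rw [residue_monomial, if_neg, zero_mul]
      intro hcond
      exact ha (funext fun j => Fin.ext ((hcond j).symm))
    rw [Fintype.sum_eq_single _ hzero, residue_monomial, if_pos (fun j => rfl), prod_X_pow,
      monomial_mul, mul_one]
    have hexp : (m - Finsupp.equivFunOnFinite.symm fun j : Fin n => ((⟨m j % q, Nat.mod_lt _ hq⟩ : Fin q) : ℕ)) +
        (Finsupp.equivFunOnFinite.symm fun j : Fin n => ((⟨m j % q, Nat.mod_lt _ hq⟩ : Fin q) : ℕ)) = m := by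
      ext j
      simp only [Finsupp.add_apply, Finsupp.tsub_apply,
        Finsupp.coe_equivFunOnFinite_symm]
      have h1 : m j % q ≤ m j := Nat.mod_le _ _
      omega
    rw [hexp]

theorem residue_mem_pSub (p : ℕ) (hp : p.Prime) [ExpChar k p] [PerfectRing k p] (r : ℕ)
    (a : Fin n → Fin (p ^ r)) (f : MvPolynomial (Fin n) k) :
    residue (p ^ r) a f ∈ pSub p hp r := by
  haveI : CharP k p := charP_of_prime hp
  induction f using MvPolynomial.induction_on' with
  | add f g ihf ihg => rw [map_add]; exact (pSub p hp r).add_mem ihf ihg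
  | monomial m c =>
    rw [residue_monomial]
    split_ifs with h
    · refine ⟨monomial (Finsupp.equivFunOnFinite.symm fun j : Fin n => m j / p ^ r)
        ((iterateFrobeniusEquiv k p r).symm c), ?_⟩
      rw [monomial_pow]
      have hexp : p ^ r • (Finsupp.equivFunOnFinite.symm fun j : Fin n => m j / p ^ r) =
          m - Finsupp.equivFunOnFinite.symm fun j : Fin n => (a j : ℕ) := by
        ext j
        simp only [Finsupp.smul_apply, Finsupp.tsub_apply,
          Finsupp.coe_equivFunOnFinite_symm, smul_eq_mul]
        have h1 := Nat.div_add_mod (m j) (p ^ r)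
        have h2 := h j
        omega
      rw [hexp]
      congr 1
      have := (iterateFrobeniusEquiv k p r).apply_symm_apply c
      rwa [iterateFrobeniusEquiv_def] at this
    · exact (pSub p hp r).zero_mem

theorem residue_pow_mul (p : ℕ) (hp : p.Prime) [ExpChar k p] (r : ℕ)
    (a a' : Fin n → Fin (p ^ r)) (y : MvPolynomial (Fin n) k) :
    residue (p ^ r) a (y ^ p ^ r * ∏ j, X j ^ (a' j : ℕ)) =
      if a = a' then y ^ p ^ r else 0 := by
  haveI : CharP k p := charP_of_prime hp
  haveI : Fact p.Prime := ⟨hp⟩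
  induction y using MvPolynomial.induction_on' with
  | add f g ihf ihg =>
    rw [add_pow_expChar_pow, add_mul, map_add, ihf, ihg]
    split_ifs <;> simp
  | monomial m c =>
    rw [monomial_pow, prod_X_pow, monomial_mul, mul_one, residue_monomial]
    have happ : ∀ j, ((p ^ r • m + Finsupp.equivFunOnFinite.symm fun j : Fin n => (a' j : ℕ)) j)
        = p ^ r * m j + (a' j : ℕ) := by
      intro j
      simp [Finsupp.add_apply, Finsupp.smul_apply, smul_eq_mul]
    have hcond : (∀ j, ((p ^ r • m + Finsupp.equivFunOnFinite.symm fun j : Fin n => (a' j : ℕ)) j)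
        % p ^ r = (a j : ℕ)) ↔ a = a' := by
      constructor
      · intro hc
        refine funext fun j => Fin.ext ?_
        have h2 := hc j
        rw [happ j, Nat.mul_add_mod, Nat.mod_eq_of_lt (a' j).isLt] at h2
        exact h2.symm
      · intro h
        intro j
        rw [happ j, Nat.mul_add_mod, Nat.mod_eq_of_lt (a' j).isLt, h]
    by_cases h : a = a'
    · rw [if_pos (hcond.mpr h), if_pos h]
      have hexp : (p ^ r • m + Finsupp.equivFunOnFinite.symm fun j : Fin n => (a' j : ℕ)) -
          (Finsupp.equivFunOnFinite.symm fun j : Fin n => (a j : ℕ)) = p ^ r • m := by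
        ext j
        rw [Finsupp.tsub_apply, happ j]
        simp only [Finsupp.coe_equivFunOnFinite_symm, Finsupp.smul_apply, smul_eq_mul]
        have hv : (a j : ℕ) = (a' j : ℕ) := by rw [h]
        omega
      rw [hexp]
    · rw [if_neg (fun hc => h (hcond.mp hc)), if_neg h]

theorem ext_of_comm (p : ℕ) (hp : p.Prime) (r : ℕ)
    (T₁ T₂ : MvPolynomial (Fin n) k →ₗ[k] MvPolynomial (Fin n) k)
    (h1 : ∀ g f, T₁ (g ^ p ^ r * f) = g ^ p ^ r * T₁ f)
    (h2 : ∀ g f, T₂ (g ^ p ^ r * f) = g ^ p ^ r * T₂ f)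
    (hag : ∀ a' : Fin n → Fin (p ^ r),
      T₁ (monomial (Finsupp.equivFunOnFinite.symm fun j => (a' j : ℕ)) 1) =
      T₂ (monomial (Finsupp.equivFunOnFinite.symm fun j => (a' j : ℕ)) 1)) :
    T₁ = T₂ := by
  have hq : 0 < p ^ r := pow_pos hp.pos r
  apply Module.Basis.ext (basisMonomials (Fin n) k)
  intro m
  have hb : basisMonomials (Fin n) k m = (monomial m 1 : MvPolynomial (Fin n) k) := by
    rw [coe_basisMonomials]
  rw [hb]
  set a₀ : Fin n → Fin (p ^ r) := fun j => ⟨m j % p ^ r, Nat.mod_lt _ hq⟩ with ha₀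
  have hm : (monomial m 1 : MvPolynomial (Fin n) k) =
      (monomial (Finsupp.equivFunOnFinite.symm fun j : Fin n => m j / p ^ r) 1) ^ p ^ r *
        monomial (Finsupp.equivFunOnFinite.symm fun j => (a₀ j : ℕ)) 1 := by
    rw [monomial_pow, monomial_mul, one_pow, one_mul]
    have hexp : m = p ^ r • (Finsupp.equivFunOnFinite.symm fun j : Fin n => m j / p ^ r) +
        Finsupp.equivFunOnFinite.symm fun j : Fin n => (a₀ j : ℕ) := by
      ext j
      simp only [Finsupp.add_apply, Finsupp.smul_apply,
        Finsupp.coe_equivFunOnFinite_symm, smul_eq_mul, ha₀]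
      exact (Nat.div_add_mod (m j) (p ^ r)).symm
    rw [← hexp]
  rw [hm, h1, h2, hag a₀]

theorem sum_ops_comm {p : ℕ} (hp : p.Prime) [CharP k p] (r : ℕ)
    (c : (Fin n → Fin (p ^ r)) × (Fin n → Fin (p ^ r)) → MvPolynomial (Fin n) k)
    (g f : MvPolynomial (Fin n) k) :
    (∑ ab : (Fin n → Fin (p ^ r)) × (Fin n → Fin (p ^ r)),
        (LinearMap.mulLeft k (c ab * ∏ j, X j ^ (ab.1 j : ℕ))) ∘ₗ
          hasse k n (fun j => (ab.2 j : ℕ)))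
      (g ^ p ^ r * f) =
    g ^ p ^ r *
      (∑ ab : (Fin n → Fin (p ^ r)) × (Fin n → Fin (p ^ r)),
        (LinearMap.mulLeft k (c ab * ∏ j, X j ^ (ab.1 j : ℕ))) ∘ₗ
          hasse k n (fun j => (ab.2 j : ℕ))) f := by
  simp only [LinearMap.sum_apply, LinearMap.comp_apply, LinearMap.mulLeft_apply]
  rw [Finset.mul_sum]
  refine Finset.sum_congr rfl fun ab _ => ?_
  rw [hasse_comm hp r _ (fun j => (ab.2 j).isLt)]
  ring

theorem sum_ops_apply_small (q : ℕ)
    (c : (Fin n → Fin q) × (Fin n → Fin q) → MvPolynomial (Fin n) k)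
    (a' : Fin n → Fin q) :
    (∑ ab : (Fin n → Fin q) × (Fin n → Fin q),
        (LinearMap.mulLeft k (c ab * ∏ j, X j ^ (ab.1 j : ℕ))) ∘ₗ
          hasse k n (fun j => (ab.2 j : ℕ)))
      (monomial (Finsupp.equivFunOnFinite.symm fun j => (a' j : ℕ)) 1) =
    trf q (fun b => ∑ a : Fin n → Fin q, c (a, b) * ∏ j, X j ^ (a j : ℕ)) a' := by
  simp only [LinearMap.sum_apply, LinearMap.comp_apply, LinearMap.mulLeft_apply]
  rw [Fintype.sum_prod_type_right]
  unfold trf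
  refine Finset.sum_congr rfl fun b _ => ?_
  show ∑ a : Fin n → Fin q, (c (a, b) * ∏ j, X j ^ (a j : ℕ)) *
      (hasse k n (fun j => (b j : ℕ))
        (monomial (Finsupp.equivFunOnFinite.symm fun j => (a' j : ℕ)) 1)) = _
  have hH : hasse k n (fun j => (b j : ℕ))
        (monomial (Finsupp.equivFunOnFinite.symm fun j => (a' j : ℕ)) 1) =
      ((∏ j, ((a' j : ℕ).choose (b j : ℕ)) : ℕ) : k) •
        (∏ j, (X j : MvPolynomial (Fin n) k) ^ ((a' j : ℕ) - (b j : ℕ))) := by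
    rw [hasse_monomial]
    have hco : (∏ j, (((Finsupp.equivFunOnFinite.symm fun j => (a' j : ℕ)) : Fin n →₀ ℕ) j).choose
          ((b j : ℕ)) : ℕ) = ∏ j, ((a' j : ℕ).choose (b j : ℕ)) := by
      refine Finset.prod_congr rfl fun j _ => ?_
      simp [Finsupp.coe_equivFunOnFinite_symm]
    have hexp : ((Finsupp.equivFunOnFinite.symm fun j => (a' j : ℕ)) : Fin n →₀ ℕ) -
        Finsupp.equivFunOnFinite.symm (fun j => (b j : ℕ)) =
        Finsupp.equivFunOnFinite.symm fun j : Fin n => ((a' j : ℕ) - (b j : ℕ)) := by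
      ext j
      simp [Finsupp.tsub_apply, Finsupp.coe_equivFunOnFinite_symm]
    rw [hco, hexp, prod_X_pow]
    rw [smul_monomial, smul_eq_mul, mul_one]
  rw [hH]
  calc ∑ a : Fin n → Fin q, (c (a, b) * ∏ j, X j ^ (a j : ℕ)) *
        (((∏ j, ((a' j : ℕ).choose (b j : ℕ)) : ℕ) : k) •
          (∏ j, (X j : MvPolynomial (Fin n) k) ^ ((a' j : ℕ) - (b j : ℕ))))
      = ((∏ j, ((a' j : ℕ).choose (b j : ℕ)) : ℕ) : k) •
          ∑ a : Fin n → Fin q, (c (a, b) * ∏ j, X j ^ (a j : ℕ)) *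
            (∏ j, (X j : MvPolynomial (Fin n) k) ^ ((a' j : ℕ) - (b j : ℕ))) := by
        rw [Finset.smul_sum]
        exact Finset.sum_congr rfl fun a _ => mul_smul_comm _ _ _
    _ = ((∏ j, ((a' j : ℕ).choose (b j : ℕ)) : ℕ) : k) •
          ((∑ a : Fin n → Fin q, c (a, b) * ∏ j, X j ^ (a j : ℕ)) *
            ∏ j, (X j : MvPolynomial (Fin n) k) ^ ((a' j : ℕ) - (b j : ℕ))) := by
        rw [Finset.sum_mul]

end DiffRAux

open DiffRAux in
/-- Over `A = k[t_1,…,t_n]` in characteristic `p`, the ring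
`Diff^r = End_{A^{p^r}}(A)` of differential operators commuting with `p^r`-th
powers of functions is a free module of rank `p^{2rn}` over the subring of
`p^r`-th powers, with basis the operators `t^a ∂^{(b)}` for
`0 ≤ a_j, b_j < p^r`.  Here `∂^{(b)}` are the divided power (Hasse) operators,
characterized by `∂^{(b)}(t^m) = (∏_j C(m_j, b_j)) t^{m-b}`. -/
theorem diff_r_free_basis (p : ℕ) (hp : p.Prime) (k : Type*) [Field k]
    [ExpChar k p] [PerfectRing k p] (n r : ℕ) (hr : 1 ≤ r) :
    ∃ H : (Fin n → ℕ) → (MvPolynomial (Fin n) k →ₗ[k] MvPolynomial (Fin n) k),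
      (∀ (b : Fin n → ℕ) (m : Fin n →₀ ℕ),
        H b (MvPolynomial.monomial m 1) =
          MvPolynomial.monomial (m - Finsupp.equivFunOnFinite.symm b)
            ((∏ j : Fin n, (m j).choose (b j) : ℕ) : k)) ∧
      ∀ T : MvPolynomial (Fin n) k →ₗ[k] MvPolynomial (Fin n) k,
        (∀ g f : MvPolynomial (Fin n) k, T (g ^ p ^ r * f) = g ^ p ^ r * T f) ↔
        ∃! c : (Fin n → Fin (p ^ r)) × (Fin n → Fin (p ^ r)) →
            MvPolynomial (Fin n) k,
          (∀ ab, ∃ y : MvPolynomial (Fin n) k, y ^ p ^ r = c ab) ∧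
          T = ∑ ab : (Fin n → Fin (p ^ r)) × (Fin n → Fin (p ^ r)),
            (LinearMap.mulLeft k
                (c ab * ∏ j : Fin n, MvPolynomial.X j ^ (ab.1 j : ℕ))) ∘ₗ
              H (fun j => (ab.2 j : ℕ)) := by
  haveI : CharP k p := charP_of_prime hp
  haveI : Fact p.Prime := ⟨hp⟩
  have hqpos : 0 < p ^ r := pow_pos hp.pos r
  refine ⟨hasse k n, fun b m => hasse_monomial b m, fun T => ⟨?_, ?_⟩⟩
  · -- forward direction
    intro hcomm
    set v : (Fin n → Fin (p ^ r)) → MvPolynomial (Fin n) k :=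
      fun a' => T (monomial (Finsupp.equivFunOnFinite.symm fun j => (a' j : ℕ)) 1) with hvdef
    refine ⟨fun ab => residue (p ^ r) ab.1 (itrf (p ^ r) v ab.2),
      ⟨fun ab => residue_mem_pSub p hp r ab.1 (itrf (p ^ r) v ab.2), ?_⟩, ?_⟩
    · -- T equals the sum of operators
      refine ext_of_comm p hp r T _ hcomm
        (sum_ops_comm hp r fun ab => residue (p ^ r) ab.1 (itrf (p ^ r) v ab.2))
        (fun a' => ?_)
      rw [sum_ops_apply_small]
      have hu : (fun b => ∑ a : Fin n → Fin (p ^ r),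
          residue (p ^ r) a (itrf (p ^ r) v b) * ∏ j, X j ^ (a j : ℕ)) = itrf (p ^ r) v :=
        funext fun b => sum_residue (p ^ r) hqpos (itrf (p ^ r) v b)
      show v a' = trf (p ^ r) (fun b => ∑ a : Fin n → Fin (p ^ r),
          residue (p ^ r) a (itrf (p ^ r) v b) * ∏ j, X j ^ (a j : ℕ)) a'
      rw [hu, trf_itrf]
    · -- uniqueness
      rintro c' ⟨hpow', hT'⟩
      have key : ∀ a' : Fin n → Fin (p ^ r),
          trf (p ^ r) (fun b => ∑ a : Fin n → Fin (p ^ r),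
            c' (a, b) * ∏ j, X j ^ (a j : ℕ)) a' = v a' := by
        intro a'
        rw [← sum_ops_apply_small (p ^ r) c' a', ← hT']
      have hu' : (fun b => ∑ a : Fin n → Fin (p ^ r),
          c' (a, b) * ∏ j, X j ^ (a j : ℕ)) = itrf (p ^ r) v := by
        funext b
        have h1 := itrf_trf (fun b => ∑ a : Fin n → Fin (p ^ r),
          c' (a, b) * ∏ j, X j ^ (a j : ℕ)) b
        rw [← h1]
        have h2 : trf (p ^ r) (fun b => ∑ a : Fin n → Fin (p ^ r),
            c' (a, b) * ∏ j, X j ^ (a j : ℕ)) = v := funext key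
        rw [h2]
      funext ab
      obtain ⟨a, b⟩ := ab
      have hc : residue (p ^ r) a (∑ a'' : Fin n → Fin (p ^ r),
          c' (a'', b) * ∏ j, X j ^ (a'' j : ℕ)) = c' (a, b) := by
        rw [map_sum]
        have hterm : ∀ a'' ∈ (univ : Finset (Fin n → Fin (p ^ r))),
            residue (p ^ r) a (c' (a'', b) * ∏ j, X j ^ (a'' j : ℕ)) =
              if a = a'' then c' (a'', b) else 0 := by
          intro a'' _
          obtain ⟨y, hy⟩ := hpow' (a'', b)
          rw [← hy, residue_pow_mul p hp r a a'' y, hy]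
        rw [Finset.sum_congr rfl hterm, Finset.sum_ite_eq]
        simp
      show c' (a, b) = residue (p ^ r) a (itrf (p ^ r) v b)
      rw [← hc]
      congr 1
      exact congrFun hu' b
  · -- backward direction
    rintro ⟨c, ⟨-, hT⟩, -⟩
    intro g f
    rw [hT]
    exact sum_ops_comm hp r c g f
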